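/- For every f ∈ A_LP one has C₂ ≤ L(f), where L(f) := r(f)/2 + (4/r(f)) ∫₀^{r(f)/2} f(x) x dx + 2 ∫_{r(f)/2}^{r(f)} f(x) dx; indeed the function g(x) := f̂(2x/r(f)) belongs to A₂, satisfies g(0) = 1 and ρ₂(g) = L(f). -/

import Mathlib

open MeasureTheory Filter
open scoped Classical

noncomputable section

/-- The Fourier transform `ĝ(α) = ∫ g(x) e^{-2πiαx} dx` of a real-valued function. -/
def fourierT (g : ℝ → ℝ) (α : ℝ) : ℂ :=
  ∫ x : ℝ, (g x : ℂ) * Complex.exp (-(2 * Real.pi * α * x : ℝ) * Complex.I)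

/-- The class `A₂` of continuous, even, non-negative functions `g ∈ L¹(ℝ)`
with `ĝ(α) ≤ 0` for `|α| ≥ 2`. -/
def memA2 (g : ℝ → ℝ) : Prop :=
  Continuous g ∧ (∀ x, g (-x) = g x) ∧ (∀ x, 0 ≤ g x) ∧ MeasureTheory.Integrable g ∧
    ∀ α : ℝ, 2 ≤ |α| → (fourierT g α).re ≤ 0

/-- The functional `ρ₂(g) = ĝ(0) + ∫_{-1}^{1} ĝ(α)|α| dα + ∫_{1≤|α|≤2} ĝ(α) dα`. -/
def rho2 (g : ℝ → ℝ) : ℝ :=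
  (fourierT g 0).re + (∫ α in (-1 : ℝ)..1, (fourierT g α).re * |α|) +
    ∫ α in {α : ℝ | 1 ≤ |α| ∧ |α| ≤ 2}, (fourierT g α).re

/-- The constant `C₂ = inf ρ₂(g)/g(0)` over nonzero `g ∈ A₂` with `g(0) > 0`. -/
def C2 : ℝ :=
  sInf {c : ℝ | ∃ g : ℝ → ℝ, memA2 g ∧ g ≠ 0 ∧ 0 < g 0 ∧ c = rho2 g / g 0}

/-- The Cohn–Elkies linear programming class `A_LP`: even continuous `f ∈ L¹(ℝ)` with
`f(0) = f̂(0) = 1`, `f̂ ≥ 0`, and `f` eventually non-positive. -/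
def memALP (f : ℝ → ℝ) : Prop :=
  Continuous f ∧ (∀ x, f (-x) = f x) ∧ MeasureTheory.Integrable f ∧
    f 0 = 1 ∧ fourierT f 0 = 1 ∧ (∀ α : ℝ, 0 ≤ (fourierT f α).re) ∧
    ∃ r : ℝ, ∀ x : ℝ, r ≤ |x| → f x ≤ 0

/-- The last sign change `r(f) = inf{r > 0 : f(x) ≤ 0 for all |x| ≥ r}`. -/
def lastSign (f : ℝ → ℝ) : ℝ :=
  sInf {r : ℝ | 0 < r ∧ ∀ x : ℝ, r ≤ |x| → f x ≤ 0}

/-- The functional `L(f) = r(f)/2 + (4/r(f)) ∫₀^{r(f)/2} f(x) x dx + 2 ∫_{r(f)/2}^{r(f)} f(x) dx`. -/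
def Lfun (f : ℝ → ℝ) : ℝ :=
  lastSign f / 2 + (4 / lastSign f) * (∫ x in (0 : ℝ)..(lastSign f / 2), f x * x) +
    2 * ∫ x in (lastSign f / 2)..(lastSign f), f x

namespace Statement15Aux

open Complex Real
open scoped FourierTransform RealInnerProductSpace Topology

/-- `fourierT` agrees with mathlib's Fourier integral of the complexification. -/
lemma fourierT_eq (g : ℝ → ℝ) (α : ℝ) :
    fourierT g α = 𝓕 (fun x : ℝ => (g x : ℂ)) α := by
  rw [Real.fourier_real_eq_integral_exp_smul, fourierT]
  congr 1
  funext x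
  rw [smul_eq_mul, mul_comm]
  congr 2
  push_cast
  ring

variable {f : ℝ → ℝ}

lemma fourierT_even (he : ∀ x, f (-x) = f x) (α : ℝ) :
    fourierT f (-α) = fourierT f α := by
  unfold fourierT
  rw [← MeasureTheory.integral_neg_eq_self
    (fun x : ℝ => (f x : ℂ) * Complex.exp (-(2 * Real.pi * α * x : ℝ) * Complex.I)) volume]
  congr 1
  funext x
  rw [he x]
  congr 2
  push_cast
  ring

lemma fourierT_real (he : ∀ x, f (-x) = f x) (α : ℝ) :
    fourierT f α = ((fourierT f α).re : ℂ) := by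
  have key : (starRingEnd ℂ) (fourierT f α) = fourierT f α := by
    rw [fourierT, ← integral_conj]
    rw [← MeasureTheory.integral_neg_eq_self
      (fun x : ℝ => (starRingEnd ℂ) ((f x : ℂ) * Complex.exp (-(2 * Real.pi * α * x : ℝ) * Complex.I)))
      volume]
    congr 1
    funext x
    rw [he x]
    rw [map_mul, ← Complex.exp_conj]
    congr 1
    · exact Complex.conj_ofReal _
    · congr 1
      simp only [map_mul, map_neg, Complex.conj_ofReal, Complex.conj_I, map_ofNat]
      push_cast
      ring
  have := Complex.conj_eq_iff_re.mp key
  exact this.symm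

lemma fourierT_cont (hi : Integrable f) :
    Continuous fun α : ℝ => (fourierT f α).re := by
  have h1 : Continuous (𝓕 (fun x : ℝ => (f x : ℂ))) :=
    VectorFourier.fourierIntegral_continuous Real.continuous_fourierChar
      (by exact continuous_inner) hi.ofReal
  have h2 : (fun α : ℝ => (fourierT f α).re)
      = fun α : ℝ => (𝓕 (fun x : ℝ => (f x : ℂ)) α).re := by
    funext α
    rw [fourierT_eq]
  rw [h2]
  exact Complex.continuous_re.comp h1

lemma F_bounded (hi : Integrable f) :
    ∃ C : ℝ, ∀ w : ℝ, ‖(fourierT f w).re‖ ≤ C := by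
  refine ⟨∫ x : ℝ, ‖(f x : ℂ)‖, fun w => ?_⟩
  have h1 : ‖𝓕 (fun x : ℝ => (f x : ℂ)) w‖ ≤ ∫ x : ℝ, ‖(f x : ℂ)‖ :=
    VectorFourier.norm_fourierIntegral_le_integral_norm _ _ _ _ _
  calc ‖(fourierT f w).re‖ ≤ ‖fourierT f w‖ := Complex.abs_re_le_norm _
    _ = ‖𝓕 (fun x : ℝ => (f x : ℂ)) w‖ := by rw [fourierT_eq]
    _ ≤ _ := h1

/-- The key analytic fact: the Fourier transform of `f ∈ A_LP` is integrable. -/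
lemma F_integrable (hf : memALP f) :
    Integrable fun α : ℝ => (fourierT f α).re := by
  obtain ⟨hc, he, hi, h0, hF0, hFnn, _⟩ := hf
  set fc : ℝ → ℂ := fun x => (f x : ℂ) with hfc_def
  have hfc : Integrable fc := hi.ofReal
  have hfcc : Continuous fc := Complex.continuous_ofReal.comp hc
  set F : ℝ → ℝ := fun α => (fourierT f α).re with hF_def
  have hFc : ∀ α : ℝ, 𝓕 fc α = ((F α : ℝ) : ℂ) := fun α => by
    rw [← fourierT_eq]; exact fourierT_real he α
  have hFcont : Continuous F := fourierT_cont hi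
  -- Multiplication formula with a Gaussian, for any `c > 0`.
  have key : ∀ c : ℝ, 0 < c →
      ((∫ w : ℝ, Real.exp (-c⁻¹ * w ^ 2) * F w : ℝ) : ℂ)
        = ∫ x : ℝ, (((Real.pi : ℂ) * c) ^ ((Module.finrank ℝ ℝ : ℂ) / 2) *
            Complex.exp (-(Real.pi : ℂ) ^ 2 * c * (‖(0 : ℝ) - x‖ : ℂ) ^ 2)) • fc x := by
    intro c hc
    have J : Integrable (fun w : ℝ =>
        Complex.exp (-(c : ℂ)⁻¹ * (‖w‖ : ℂ) ^ 2 + 2 * (Real.pi : ℂ) * Complex.I * (⟪(0 : ℝ), w⟫ : ℝ))) :=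
      GaussianFourier.integrable_cexp_neg_mul_sq_norm_add (by simpa using hc) _ _
    have mult : ∫ w : ℝ, (fun w : ℝ =>
          Complex.exp (-(c : ℂ)⁻¹ * (‖w‖ : ℂ) ^ 2 + 2 * (Real.pi : ℂ) * Complex.I * (⟪(0 : ℝ), w⟫ : ℝ))) w
            • 𝓕 fc w
        = ∫ w : ℝ, 𝓕 (fun w : ℝ =>
          Complex.exp (-(c : ℂ)⁻¹ * (‖w‖ : ℂ) ^ 2 + 2 * (Real.pi : ℂ) * Complex.I * (⟪(0 : ℝ), w⟫ : ℝ))) w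
            • fc w := by
      have hm := (VectorFourier.integral_fourierIntegral_smul_eq_flip (L := innerₗ ℝ)
        Real.continuous_fourierChar continuous_inner J hfc).symm
      simp at hm ⊢
      exact hm
    have lhs_eq : ((∫ w : ℝ, Real.exp (-c⁻¹ * w ^ 2) * F w : ℝ) : ℂ)
        = ∫ w : ℝ, (fun w : ℝ =>
          Complex.exp (-(c : ℂ)⁻¹ * (‖w‖ : ℂ) ^ 2 + 2 * (Real.pi : ℂ) * Complex.I * (⟪(0 : ℝ), w⟫ : ℝ))) w
            • 𝓕 fc w := by
      calc ((∫ w : ℝ, Real.exp (-c⁻¹ * w ^ 2) * F w : ℝ) : ℂ)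
          = ∫ w : ℝ, ((Real.exp (-c⁻¹ * w ^ 2) * F w : ℝ) : ℂ) := integral_ofReal.symm
        _ = _ := by
          congr 1
          funext w
          rw [hFc w, smul_eq_mul]
          simp only [inner_zero_left, Complex.ofReal_zero, mul_zero, add_zero]
          have h2 : (-(c : ℂ)⁻¹ * (‖w‖ : ℂ) ^ 2) = ((-c⁻¹ * w ^ 2 : ℝ) : ℂ) := by
            rw [show ((‖w‖ : ℝ) : ℂ) ^ 2 = ((‖w‖ ^ 2 : ℝ) : ℂ) by push_cast; ring,
              show (‖w‖ ^ 2 : ℝ) = w ^ 2 by rw [Real.norm_eq_abs]; exact _root_.sq_abs w]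
            push_cast
            ring
          rw [h2, ← Complex.ofReal_exp, ← Complex.ofReal_mul]
    rw [lhs_eq, mult]
    congr 1
    funext w
    congr 1
    rw [fourier_gaussian_innerProductSpace' (by simpa using hc)]
    congr 1
    · congr 1
      simp
    · congr 1
      field_simp
  -- the limit of the right-hand side is `fc 0 = 1`
  have T2 := Real.tendsto_integral_gaussian_smul' (f := fc) hfc (v := (0 : ℝ))
    hfcc.continuousAt
  have T3 : Tendsto (fun c : ℝ => ∫ w : ℝ, Real.exp (-c⁻¹ * w ^ 2) * F w) atTop (𝓝 1) := by
    have Tc : Tendsto (fun c : ℝ => ((∫ w : ℝ, Real.exp (-c⁻¹ * w ^ 2) * F w : ℝ) : ℂ))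
        atTop (𝓝 (fc 0)) := by
      apply T2.congr'
      filter_upwards [Ioi_mem_atTop (0 : ℝ)] with c hc
      exact (key c hc).symm
    have h1 : fc 0 = ((1 : ℝ) : ℂ) := by simp [hfc_def, h0]
    rw [h1] at Tc
    have := (Complex.continuous_re.tendsto _).comp Tc
    simpa [Function.comp_def] using this
  -- boundedness of the approximating integrals
  obtain ⟨M, hM⟩ : ∃ M : ℝ, ∀ n : ℕ,
      (∫ w : ℝ, Real.exp (-((n : ℝ) + 1)⁻¹ * w ^ 2) * F w) ≤ M := by
    have Tn : Tendsto (fun n : ℕ => ∫ w : ℝ, Real.exp (-((n : ℝ) + 1)⁻¹ * w ^ 2) * F w)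
        atTop (𝓝 1) :=
      T3.comp (tendsto_atTop_add_const_right atTop 1 tendsto_natCast_atTop_atTop)
    obtain ⟨M, hM⟩ := Tn.bddAbove_range
    exact ⟨M, fun n => hM ⟨n, rfl⟩⟩
  -- integrability of the approximants
  have hint : ∀ c : ℝ, 0 < c → Integrable fun w : ℝ => Real.exp (-c⁻¹ * w ^ 2) * F w := by
    intro c hc
    have g1 : Integrable fun w : ℝ => Real.exp (-c⁻¹ * w ^ 2) :=
      integrable_exp_neg_mul_sq (by positivity)
    have := g1.bdd_mul hFcont.aestronglyMeasurable (ae_of_all _ (F_bounded hi).choose_spec)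
    simpa [mul_comm] using this
  -- monotone convergence
  have hFnn' : ∀ w : ℝ, 0 ≤ F w := fun w => hFnn w
  have hmono : Monotone fun (n : ℕ) (w : ℝ) =>
      ENNReal.ofReal (Real.exp (-((n : ℝ) + 1)⁻¹ * w ^ 2) * F w) := by
    intro n m hnm
    intro w
    apply ENNReal.ofReal_le_ofReal
    apply mul_le_mul_of_nonneg_right _ (hFnn' w)
    apply Real.exp_le_exp.2
    have h1 : ((m : ℝ) + 1)⁻¹ ≤ ((n : ℝ) + 1)⁻¹ := by
      apply inv_anti₀ (by positivity)
      have : (n : ℝ) ≤ (m : ℝ) := by exact_mod_cast hnm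
      linarith
    nlinarith [sq_nonneg w]
  have hmeas : ∀ n : ℕ, Measurable fun w : ℝ =>
      ENNReal.ofReal (Real.exp (-((n : ℝ) + 1)⁻¹ * w ^ 2) * F w) := by
    intro n
    exact (Continuous.measurable (by fun_prop)).ennreal_ofReal
  have hsup : ∀ w : ℝ,
      (⨆ n : ℕ, ENNReal.ofReal (Real.exp (-((n : ℝ) + 1)⁻¹ * w ^ 2) * F w))
        = ENNReal.ofReal (F w) := by
    intro w
    refine tendsto_nhds_unique (tendsto_atTop_iSup fun n m h => hmono h w) ?_
    have l1 : Tendsto (fun n : ℕ => ((n : ℝ) + 1)⁻¹) atTop (𝓝 0) := by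
      simpa [one_div] using tendsto_one_div_add_atTop_nhds_zero_nat (𝕜 := ℝ)
    have l2 : Tendsto (fun n : ℕ => Real.exp (-((n : ℝ) + 1)⁻¹ * w ^ 2) * F w)
        atTop (𝓝 (F w)) := by
      have l3 : Tendsto (fun n : ℕ => -((n : ℝ) + 1)⁻¹ * w ^ 2) atTop (𝓝 0) := by
        simpa using l1.neg.mul_const (w ^ 2)
      have l4 := ((Real.continuous_exp.tendsto _).comp l3).mul_const (F w)
      simpa using l4
    exact (ENNReal.continuous_ofReal.tendsto _).comp l2
  have mct : (∫⁻ w : ℝ, ENNReal.ofReal (F w)) ≤ ENNReal.ofReal M := by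
    have e1 : (∫⁻ w : ℝ, ENNReal.ofReal (F w))
        = ⨆ n : ℕ, ∫⁻ w : ℝ, ENNReal.ofReal (Real.exp (-((n : ℝ) + 1)⁻¹ * w ^ 2) * F w) := by
      rw [← lintegral_iSup hmeas hmono]
      congr 1
      funext w
      rw [hsup w]
    rw [e1]
    apply iSup_le
    intro n
    rw [← MeasureTheory.ofReal_integral_eq_lintegral_ofReal (hint _ (by positivity))
      (ae_of_all _ fun w => mul_nonneg (Real.exp_nonneg _) (hFnn' w))]
    exact ENNReal.ofReal_le_ofReal (hM n)
  refine ⟨hFcont.aestronglyMeasurable, ?_⟩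
  rw [hasFiniteIntegral_iff_ofReal (ae_of_all _ hFnn')]
  exact lt_of_le_of_lt mct ENNReal.ofReal_lt_top

/-- Fourier inversion for `fourierT`. -/
lemma fourierT_inv (hf : memALP f) (v : ℝ) :
    fourierT (fun α => (fourierT f α).re) v = ((f v : ℝ) : ℂ) := by
  obtain ⟨hc, he, hi, h0, hF0, hFnn, hr⟩ := hf
  set fc : ℝ → ℂ := fun x => (f x : ℂ) with hfc_def
  have hfc : Integrable fc := hi.ofReal
  have hFc : 𝓕 fc = fun α : ℝ => (((fourierT f α).re : ℝ) : ℂ) := by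
    funext α
    rw [← fourierT_eq]
    exact fourierT_real he α
  have hFint : Integrable (𝓕 fc) := by
    rw [hFc]
    exact (F_integrable ⟨hc, he, hi, h0, hF0, hFnn, hr⟩).ofReal
  have hfcc : Continuous fc := Complex.continuous_ofReal.comp hc
  have hinv : ∀ w : ℝ, 𝓕⁻ (𝓕 fc) w = fc w := fun w =>
    hfc.fourierInv_fourier_eq hFint hfcc.continuousAt
  calc fourierT (fun α => (fourierT f α).re) v
      = 𝓕 (fun α : ℝ => (((fourierT f α).re : ℝ) : ℂ)) v := fourierT_eq _ _
    _ = 𝓕 (𝓕 fc) v := by rw [hFc]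
    _ = 𝓕⁻ (𝓕 fc) (-v) := by rw [Real.fourierInv_eq_fourier_neg, neg_neg]
    _ = fc (-v) := hinv (-v)
    _ = ((f v : ℝ) : ℂ) := by show ((f (-v) : ℝ) : ℂ) = _; rw [he v]

lemma integral_F_eq_one (hf : memALP f) :
    (∫ α : ℝ, (fourierT f α).re) = 1 := by
  have h1 : fourierT (fun α => (fourierT f α).re) 0 = ((f 0 : ℝ) : ℂ) := fourierT_inv hf 0
  have h2 : fourierT (fun α => (fourierT f α).re) 0
      = ((∫ α : ℝ, (fourierT f α).re : ℝ) : ℂ) := by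
    rw [fourierT]
    have e1 : (fun α : ℝ => ((fourierT f α).re : ℂ)
        * Complex.exp (-(2 * Real.pi * 0 * α : ℝ) * Complex.I))
        = fun α : ℝ => (((fourierT f α).re : ℝ) : ℂ) := by
      funext α
      simp
    rw [e1]
    exact integral_ofReal
  rw [h2, hf.2.2.2.1] at h1
  exact_mod_cast h1

lemma f_le_one (hf : memALP f) (x : ℝ) : f x ≤ 1 := by
  have hinv := fourierT_inv hf x
  have hFnn := hf.2.2.2.2.2.1
  have h2 : ‖fourierT (fun α => (fourierT f α).re) x‖ ≤ ∫ α : ℝ, (fourierT f α).re := by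
    calc ‖fourierT (fun α => (fourierT f α).re) x‖
        ≤ ∫ α : ℝ, ‖((fourierT f α).re : ℂ) * Complex.exp (-(2 * Real.pi * x * α : ℝ) * Complex.I)‖ := by
          rw [fourierT]
          exact norm_integral_le_integral_norm _
      _ = ∫ α : ℝ, (fourierT f α).re := by
          congr 1
          funext α
          rw [norm_mul, Complex.norm_real]
          rw [show ‖Complex.exp (-(2 * Real.pi * x * α : ℝ) * Complex.I)‖
              = ‖Complex.exp ((-(2 * Real.pi * x * α) : ℝ) * Complex.I)‖ by norm_cast]
          rw [Complex.norm_exp_ofReal_mul_I]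
          rw [mul_one, Real.norm_eq_abs, _root_.abs_of_nonneg (hFnn α)]
  rw [integral_F_eq_one hf] at h2
  have h3 : f x ≤ ‖fourierT (fun α => (fourierT f α).re) x‖ := by
    rw [hinv]
    calc f x ≤ |f x| := le_abs_self _
      _ = ‖((f x : ℝ) : ℂ)‖ := by rw [Complex.norm_real, Real.norm_eq_abs]
  linarith

lemma integral_f_eq_one (hf : memALP f) : (∫ x : ℝ, f x) = 1 := by
  have h2 : fourierT f 0 = ((∫ x : ℝ, f x : ℝ) : ℂ) := by
    rw [fourierT]
    have e1 : (fun x : ℝ => ((f x : ℝ) : ℂ)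
        * Complex.exp (-(2 * Real.pi * 0 * x : ℝ) * Complex.I))
        = fun x : ℝ => ((f x : ℝ) : ℂ) := by
      funext x
      simp
    rw [e1]
    exact integral_ofReal
  rw [hf.2.2.2.2.1] at h2
  exact_mod_cast h2.symm

lemma lastSign_spec (hf : memALP f) :
    0 < lastSign f ∧ ∀ x : ℝ, lastSign f ≤ |x| → f x ≤ 0 := by
  obtain ⟨hc, he, hi, h0, hF0, hFnn, r0, hr0⟩ := hf
  set S : Set ℝ := {r : ℝ | 0 < r ∧ ∀ x : ℝ, r ≤ |x| → f x ≤ 0} with hS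
  have hne : S.Nonempty := by
    refine ⟨max r0 1, lt_of_lt_of_le zero_lt_one (le_max_right _ _), fun x hx => ?_⟩
    exact hr0 x (le_trans (le_max_left _ _) hx)
  obtain ⟨δ, hδpos, hδ⟩ : ∃ δ > 0, ∀ y : ℝ, |y - 0| < δ → |f y - f 0| < 1 := by
    have := Metric.continuousAt_iff.mp (hc.continuousAt (x := 0))
    obtain ⟨δ, hδpos, hδ⟩ := this 1 zero_lt_one
    exact ⟨δ, hδpos, fun y hy => hδ hy⟩
  have hpos : ∀ y : ℝ, |y| < δ → 0 < f y := by
    intro y hy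
    have := hδ y (by simpa using hy)
    rw [h0] at this
    have := abs_lt.mp this
    linarith [this.1]
  have hlb : δ / 2 ∈ lowerBounds S := by
    intro s hs
    by_contra hcon
    push_neg at hcon
    have hspos := hs.1
    have : f s ≤ 0 := hs.2 s (le_abs_self s)
    have : 0 < f s := hpos s (by rw [_root_.abs_of_pos hspos]; linarith)
    linarith
  have hbdd : BddBelow S := ⟨δ / 2, hlb⟩
  have hrpos : 0 < lastSign f := by
    have : δ / 2 ≤ sInf S := le_csInf hne hlb
    have : 0 < sInf S := lt_of_lt_of_le (by linarith) this
    exact this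
  refine ⟨hrpos, fun x hx => ?_⟩
  have hxabs : f x = f |x| := by
    rcases le_or_gt 0 x with h | h
    · rw [_root_.abs_of_nonneg h]
    · rw [_root_.abs_of_neg h, ← he x]
  rw [hxabs]
  have habs : lastSign f ≤ |x| := hx
  have key : ∀ ε : ℝ, 0 < ε → f (|x| + ε) ≤ 0 := by
    intro ε hε
    have h1 : sInf S < |x| + ε := lt_of_le_of_lt habs (by linarith)
    obtain ⟨s, hsS, hs⟩ := exists_lt_of_csInf_lt hne h1
    refine hsS.2 _ ?_
    rw [_root_.abs_of_nonneg (by positivity : (0:ℝ) ≤ |x| + ε)]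
    linarith
  have tends : Tendsto (fun ε : ℝ => f (|x| + ε)) (𝓝[>] 0) (𝓝 (f |x|)) := by
    have h1 : Tendsto (fun ε : ℝ => |x| + ε) (𝓝[>] (0:ℝ)) (𝓝 |x|) := by
      have h2 : Tendsto (fun ε : ℝ => |x| + ε) (𝓝 (0:ℝ)) (𝓝 (|x| + 0)) :=
        tendsto_const_nhds.add tendsto_id
      rw [add_zero] at h2
      exact h2.mono_left nhdsWithin_le_nhds
    exact (hc.tendsto _).comp h1
  refine le_of_tendsto tends ?_
  filter_upwards [self_mem_nhdsWithin] with ε hε using key ε hε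

/-- Fourier transform of a scaled function. -/
lemma fourierT_comp_mul (F : ℝ → ℝ) {a : ℝ} (ha : 0 < a) (α : ℝ) :
    fourierT (fun x => F (a * x)) α = (a⁻¹ : ℝ) • fourierT F (α / a) := by
  unfold fourierT
  have hfe : (fun x : ℝ => ((F (a * x) : ℝ) : ℂ) * Complex.exp (-(2 * Real.pi * α * x : ℝ) * Complex.I))
      = fun x : ℝ => (fun y : ℝ => ((F y : ℝ) : ℂ) *
          Complex.exp (-(2 * Real.pi * (α / a) * y : ℝ) * Complex.I)) (a * x) := by
    funext x
    simp only []
    congr 3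
    push_cast
    have ha' : (a : ℂ) ≠ 0 := Complex.ofReal_ne_zero.mpr (ne_of_gt ha)
    field_simp
  rw [hfe, MeasureTheory.Measure.integral_comp_mul_left
    (fun y : ℝ => ((F y : ℝ) : ℂ) * Complex.exp (-(2 * Real.pi * (α / a) * y : ℝ) * Complex.I)) a]
  rw [_root_.abs_of_pos (by positivity : (0:ℝ) < a⁻¹)]

lemma even_interval {h : ℝ → ℝ} (hcont : Continuous h) (hev : ∀ x, h (-x) = h x) (b : ℝ) :
    (∫ x in (-b : ℝ)..b, h x) = 2 * ∫ x in (0 : ℝ)..b, h x := by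
  have h1 : (∫ x in (0:ℝ)..b, h x) = ∫ x in (-b:ℝ)..(0:ℝ), h x := by
    have := intervalIntegral.integral_comp_neg (a := (0:ℝ)) (b := b) h
    simp only [neg_zero] at this
    rw [← this]
    congr 1
    funext x
    rw [hev x]
  have h2 : (∫ x in (-b:ℝ)..(0:ℝ), h x) + ∫ x in (0:ℝ)..b, h x = ∫ x in (-b:ℝ)..b, h x :=
    intervalIntegral.integral_add_adjacent_intervals (hcont.intervalIntegrable _ _)
      (hcont.intervalIntegrable _ _)
  rw [← h2, ← h1]
  ring

lemma set_eq : {α : ℝ | 1 ≤ |α| ∧ |α| ≤ 2} = Set.Icc (-2 : ℝ) (-1) ∪ Set.Icc (1 : ℝ) 2 := by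
  ext α
  simp only [Set.mem_setOf_eq, Set.mem_union, Set.mem_Icc]
  rcases le_or_gt 0 α with h | h
  · rw [_root_.abs_of_nonneg h]
    constructor
    · rintro ⟨h1, h2⟩; right; exact ⟨h1, h2⟩
    · rintro (⟨h1, h2⟩ | ⟨h1, h2⟩) <;> constructor <;> linarith
  · rw [_root_.abs_of_neg h]
    constructor
    · rintro ⟨h1, h2⟩; left; exact ⟨by linarith, by linarith⟩
    · rintro (⟨h1, h2⟩ | ⟨h1, h2⟩) <;> constructor <;> linarith

end Statement15Aux

open Statement15Aux Complex Real
open scoped FourierTransform RealInnerProductSpace Topology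

/-- For every `f ∈ A_LP` one has `C₂ ≤ L(f)`; indeed the function `g(x) := f̂(2x/r(f))`
belongs to `A₂`, satisfies `g(0) = 1` and `ρ₂(g) = L(f)`. -/
theorem statement15 (f : ℝ → ℝ) (hf : memALP f) :
    C2 ≤ Lfun f ∧
    memA2 (fun x => (fourierT f (2 * x / lastSign f)).re) ∧
    (fun x => (fourierT f (2 * x / lastSign f)).re) 0 = 1 ∧
    rho2 (fun x => (fourierT f (2 * x / lastSign f)).re) = Lfun f := by
  obtain ⟨hrpos, hrspec⟩ := lastSign_spec hf
  have hc := hf.1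
  have he := hf.2.1
  have hi := hf.2.2.1
  have h0 := hf.2.2.2.1
  have hF0 := hf.2.2.2.2.1
  have hFnn := hf.2.2.2.2.2.1
  set r : ℝ := lastSign f with hr_def
  have hrne : r ≠ 0 := ne_of_gt hrpos
  set G : ℝ → ℝ := fun x => (fourierT f (2 * x / r)).re with hG_def
  -- rewrite G as composition with multiplication
  have hGa : G = fun x => (fun α => (fourierT f α).re) ((2 / r) * x) := by
    funext x
    simp only [hG_def]
    congr 2
    ring
  -- the Fourier transform of G
  have hGft : ∀ α : ℝ, fourierT G α = (((r / 2) * f (r * α / 2) : ℝ) : ℂ) := by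
    intro α
    rw [hGa, fourierT_comp_mul (fun α => (fourierT f α).re)
      (show (0:ℝ) < 2 / r by positivity) α, fourierT_inv hf]
    rw [Complex.real_smul, ← Complex.ofReal_mul]
    congr 2
    · rw [inv_div]
    · field_simp
  have hGre : ∀ α : ℝ, (fourierT G α).re = (r / 2) * f (r / 2 * α) := by
    intro α
    rw [hGft α, Complex.ofReal_re]
    congr 2
    ring
  -- G is continuous, even, nonneg, integrable
  have hGcont : Continuous G := by
    rw [hGa]
    exact (fourierT_cont hi).comp (by fun_prop)
  have hGeven : ∀ x, G (-x) = G x := by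
    intro x
    simp only [hG_def]
    have harg : 2 * (-x) / r = -(2 * x / r) := by ring
    rw [harg, fourierT_even he]
  have hGnn : ∀ x, 0 ≤ G x := fun x => hFnn _
  have hGint : Integrable G := by
    have h1 := (F_integrable hf).comp_mul_left' (ne_of_gt (by positivity : (0:ℝ) < 2 / r))
    have h2 : (fun x : ℝ => (fourierT f (2 / r * x)).re) = G := by
      funext x
      simp only [hG_def]
      congr 2
      ring
    rwa [h2] at h1
  have hf_le_one := f_le_one hf
  have hGft_nonpos : ∀ α : ℝ, 2 ≤ |α| → (fourierT G α).re ≤ 0 := by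
    intro α hα
    rw [hGre α]
    have harg : r ≤ |r / 2 * α| := by
      rw [abs_mul, _root_.abs_of_pos (by positivity : (0:ℝ) < r / 2)]
      nlinarith
    have := hrspec _ harg
    have h2 : (0:ℝ) < r / 2 := by positivity
    exact mul_nonpos_of_nonneg_of_nonpos (le_of_lt h2) this
  have hA2 : memA2 G := ⟨hGcont, hGeven, hGnn, hGint, hGft_nonpos⟩
  -- G 0 = 1
  have hG0 : G 0 = 1 := by
    simp only [hG_def]
    rw [show 2 * (0:ℝ) / r = 0 by ring, hF0]
    rfl
  -- continuity of the transform-side function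
  have hhcont : Continuous fun α : ℝ => (r / 2) * f (r / 2 * α) := by fun_prop
  have hheven : ∀ α : ℝ, (r / 2) * f (r / 2 * -α) = (r / 2) * f (r / 2 * α) := by
    intro α
    rw [show r / 2 * -α = -(r / 2 * α) by ring, he]
  -- ρ₂(G) computation
  -- piece 1
  have hp1 : (fourierT G 0).re = r / 2 := by
    rw [hGre, mul_zero, h0, mul_one]
  -- piece 2
  have hp2 : (∫ α in (-1 : ℝ)..1, (fourierT G α).re * |α|)
      = (4 / r) * ∫ x in (0 : ℝ)..(r / 2), f x * x := by
    have e1 : (∫ α in (-1 : ℝ)..1, (fourierT G α).re * |α|)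
        = ∫ α in (-1 : ℝ)..1, (r / 2) * f (r / 2 * α) * |α| := by
      congr 1
      funext α
      rw [hGre α]
    rw [e1]
    rw [even_interval (by fun_prop) (fun α => by rw [abs_neg, hheven α]) 1]
    have e2 : (∫ α in (0 : ℝ)..1, (r / 2) * f (r / 2 * α) * |α|)
        = ∫ α in (0 : ℝ)..1, (fun y => f y * y) (r / 2 * α) := by
      apply intervalIntegral.integral_congr
      intro α hα
      rw [Set.uIcc_of_le (by norm_num : (0:ℝ) ≤ 1)] at hα
      show r / 2 * f (r / 2 * α) * |α| = f (r / 2 * α) * (r / 2 * α)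
      rw [_root_.abs_of_nonneg hα.1]
      ring
    rw [e2, intervalIntegral.integral_comp_mul_left (fun y => f y * y)
      (ne_of_gt (by positivity : (0:ℝ) < r / 2))]
    rw [mul_zero, mul_one, smul_eq_mul]
    rw [inv_div]
    field_simp
    ring
  -- piece 3
  have hp3 : (∫ α in {α : ℝ | 1 ≤ |α| ∧ |α| ≤ 2}, (fourierT G α).re)
      = 2 * ∫ x in (r / 2 : ℝ)..r, f x := by
    have e1 : (∫ α in {α : ℝ | 1 ≤ |α| ∧ |α| ≤ 2}, (fourierT G α).re)
        = ∫ α in {α : ℝ | 1 ≤ |α| ∧ |α| ≤ 2}, (r / 2) * f (r / 2 * α) := by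
      refine setIntegral_congr_fun ?_ ?_
      · rw [set_eq]
        exact (measurableSet_Icc).union measurableSet_Icc
      · intro α _
        exact hGre α
    rw [e1, set_eq]
    have hdisj : Disjoint (Set.Icc (-2 : ℝ) (-1)) (Set.Icc (1 : ℝ) 2) := by
      rw [Set.disjoint_left]
      intro α h1 h2
      rw [Set.mem_Icc] at h1 h2
      linarith [h1.2, h2.1]
    rw [setIntegral_union hdisj measurableSet_Icc
      (hhcont.integrableOn_Icc) (hhcont.integrableOn_Icc)]
    have eIcc : ∀ a b : ℝ, a ≤ b → (∫ α in Set.Icc a b, (r / 2) * f (r / 2 * α))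
        = ∫ α in a..b, (r / 2) * f (r / 2 * α) := by
      intro a b hab
      rw [integral_Icc_eq_integral_Ioc, ← intervalIntegral.integral_of_le hab]
    rw [eIcc _ _ (by norm_num : (-2:ℝ) ≤ -1), eIcc _ _ (by norm_num : (1:ℝ) ≤ 2)]
    have erefl : (∫ α in (-2 : ℝ)..(-1 : ℝ), (r / 2) * f (r / 2 * α))
        = ∫ α in (1 : ℝ)..2, (r / 2) * f (r / 2 * α) := by
      have := intervalIntegral.integral_comp_neg (a := (1:ℝ)) (b := (2:ℝ))
        (fun α => (r / 2) * f (r / 2 * α))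
      rw [← this]
      congr 1
      funext α
      exact hheven α
    rw [erefl]
    have ecomp : (∫ α in (1 : ℝ)..2, (r / 2) * f (r / 2 * α)) = ∫ x in (r / 2 : ℝ)..r, f x := by
      rw [intervalIntegral.integral_const_mul]
      rw [intervalIntegral.integral_comp_mul_left f
        (ne_of_gt (by positivity : (0:ℝ) < r / 2))]
      rw [mul_one, show r / 2 * 2 = r by ring, smul_eq_mul]
      rw [inv_div]
      field_simp
    rw [ecomp]
    ring
  have hrho : rho2 G = Lfun f := by
    rw [rho2, hp1, hp2, hp3, Lfun, ← hr_def]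
  -- nonnegativity of Lfun f (needed if the defining set is not bounded below)
  have hLnonneg : 0 ≤ Lfun f := by
    -- ∫_{Icc(-r,r)} f ≥ 1
    have hIcc_ge : (1 : ℝ) ≤ ∫ x in Set.Icc (-r) r, f x := by
      have hadd := MeasureTheory.integral_add_compl (measurableSet_Icc (a := -r) (b := r)) hi
      have hcompl : (∫ x in (Set.Icc (-r) r)ᶜ, f x) ≤ 0 := by
        apply integral_nonpos_of_ae
        rw [Filter.EventuallyLE, ae_restrict_iff' (measurableSet_Icc).compl]
        apply ae_of_all
        intro x hx
        simp only [Set.mem_compl_iff, Set.mem_Icc, not_and_or, not_le] at hx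
        have : r ≤ |x| := by
          rcases hx with h | h
          · rw [_root_.abs_of_neg (by linarith)]; linarith
          · rw [_root_.abs_of_pos (by linarith)]; linarith
        exact hrspec x this
      rw [integral_f_eq_one hf] at hadd
      linarith
    have hIcc_eq : (∫ x in Set.Icc (-r) r, f x) = ∫ x in (-r : ℝ)..r, f x := by
      rw [integral_Icc_eq_integral_Ioc, ← intervalIntegral.integral_of_le (by linarith)]
    have heven_int : (∫ x in (-r : ℝ)..r, f x) = 2 * ∫ x in (0 : ℝ)..r, f x :=
      even_interval hc he r
    have hsplit : (∫ x in (0 : ℝ)..(r/2), f x) + (∫ x in (r/2 : ℝ)..r, f x)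
        = ∫ x in (0 : ℝ)..r, f x :=
      intervalIntegral.integral_add_adjacent_intervals (hc.intervalIntegrable _ _)
        (hc.intervalIntegrable _ _)
    -- the weighted bound
    have hw : (∫ x in (0 : ℝ)..(r/2), f x * (2 - 4 / r * x)) ≤ r / 2 := by
      have hmono : (∫ x in (0 : ℝ)..(r/2), f x * (2 - 4 / r * x))
          ≤ ∫ x in (0 : ℝ)..(r/2), (2 - 4 / r * x) := by
        apply intervalIntegral.integral_mono_on (by positivity)
        · exact (by fun_prop : Continuous fun x => f x * (2 - 4 / r * x)).intervalIntegrable _ _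
        · exact (by fun_prop : Continuous fun x : ℝ => (2 - 4 / r * x)).intervalIntegrable _ _
        · intro x hx
          rw [Set.mem_Icc] at hx
          have hfac : 0 ≤ 2 - 4 / r * x := by
            have h1 : 4 / r * x ≤ 4 / r * (r / 2) := by
              apply mul_le_mul_of_nonneg_left hx.2 (by positivity)
            have h2 : 4 / r * (r / 2) = 2 := by field_simp; norm_num
            linarith
          calc f x * (2 - 4 / r * x) ≤ 1 * (2 - 4 / r * x) :=
                mul_le_mul_of_nonneg_right (hf_le_one x) hfac
            _ = 2 - 4 / r * x := one_mul _
      have hcomp : (∫ x in (0 : ℝ)..(r/2), (2 - 4 / r * x)) = r / 2 := by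
        rw [intervalIntegral.integral_sub (intervalIntegrable_const)
          ((by fun_prop : Continuous fun x : ℝ => 4 / r * x).intervalIntegrable _ _)]
        rw [intervalIntegral.integral_const, intervalIntegral.integral_const_mul,
          integral_id]
        simp only [smul_eq_mul]
        field_simp
        ring
      linarith
    -- expand the weighted integral
    have hexp : (∫ x in (0 : ℝ)..(r/2), f x * (2 - 4 / r * x))
        = 2 * (∫ x in (0 : ℝ)..(r/2), f x) - (4 / r) * ∫ x in (0 : ℝ)..(r/2), f x * x := by
      have e1 : (∫ x in (0 : ℝ)..(r/2), f x * (2 - 4 / r * x))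
          = ∫ x in (0 : ℝ)..(r/2), (2 * f x - 4 / r * (f x * x)) := by
        congr 1
        funext x
        ring
      rw [e1, intervalIntegral.integral_sub
        ((by fun_prop : Continuous fun x : ℝ => 2 * f x).intervalIntegrable _ _)
        ((by fun_prop : Continuous fun x : ℝ => 4 / r * (f x * x)).intervalIntegrable _ _),
        intervalIntegral.integral_const_mul, intervalIntegral.integral_const_mul]
    rw [Lfun, ← hr_def]
    have h1 : (1 : ℝ) ≤ 2 * ((∫ x in (0 : ℝ)..(r/2), f x) + (∫ x in (r/2 : ℝ)..r, f x)) := by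
      rw [hsplit, ← heven_int, ← hIcc_eq]
      exact hIcc_ge
    linarith
  -- conclusion
  have hGne : G ≠ 0 := by
    intro hcon
    have : G 0 = 0 := by rw [hcon]; rfl
    rw [hG0] at this
    norm_num at this
  have hmem : Lfun f ∈ {c : ℝ | ∃ g : ℝ → ℝ, memA2 g ∧ g ≠ 0 ∧ 0 < g 0 ∧ c = rho2 g / g 0} := by
    refine ⟨G, hA2, hGne, by rw [hG0]; norm_num, ?_⟩
    rw [hG0, div_one, hrho]
  have hC2 : C2 ≤ Lfun f := by
    by_cases hbdd : BddBelow {c : ℝ | ∃ g : ℝ → ℝ, memA2 g ∧ g ≠ 0 ∧ 0 < g 0 ∧ c = rho2 g / g 0}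
    · exact csInf_le hbdd hmem
    · rw [C2, Real.sInf_of_not_bddBelow hbdd]
      exact hLnonneg
  exact ⟨hC2, hA2, hG0, hrho⟩

end
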